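/- Let H be a finite abelian group with a symplectic structure B. Then the element J_B = |H|⁻¹ Σ_{x,y ∈ H} e^{⟨x,y⟩} x ⊗ y is a twist for ℂ[H]; in particular J_B is invertible with inverse J_B⁻¹ = |H|⁻¹ Σ_{x,y ∈ H} e^{-⟨x,y⟩} x ⊗ y, where e^{-⟨x,y⟩} := (B(y)(x))⁻¹. -/

import Mathlib

open TensorProduct

noncomputable section

variable (G : Type*) [Group G]

/-- Comultiplication on the group algebra `ℂ[G]`, determined by `Δ(g) = g ⊗ g`. -/
def GroupAlgebra.comul :
    MonoidAlgebra ℂ G →ₐ[ℂ] MonoidAlgebra ℂ G ⊗[ℂ] MonoidAlgebra ℂ G :=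
  (MonoidAlgebra.lift ℂ _ G)
    { toFun := fun g => MonoidAlgebra.of ℂ G g ⊗ₜ[ℂ] MonoidAlgebra.of ℂ G g
      map_one' := by simp [Algebra.TensorProduct.one_def, MonoidAlgebra.one_def]
      map_mul' := fun g h => by simp [Algebra.TensorProduct.tmul_mul_tmul] }

/-- Counit on the group algebra `ℂ[G]`, determined by `ε(g) = 1`. -/
def GroupAlgebra.counit : MonoidAlgebra ℂ G →ₐ[ℂ] ℂ :=
  (MonoidAlgebra.lift ℂ ℂ G) 1

/-- The equation `((Δ ⊗ id)(J))·(J ⊗ 1) = ((id ⊗ Δ)(J))·(1 ⊗ J)` in `ℂ[G] ⊗ ℂ[G] ⊗ ℂ[G]`. -/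
def GroupAlgebra.TwistEq (J : MonoidAlgebra ℂ G ⊗[ℂ] MonoidAlgebra ℂ G) : Prop :=
  (Algebra.TensorProduct.assoc ℂ ℂ ℂ (MonoidAlgebra ℂ G) (MonoidAlgebra ℂ G) (MonoidAlgebra ℂ G))
      ((Algebra.TensorProduct.map (GroupAlgebra.comul G) (AlgHom.id ℂ (MonoidAlgebra ℂ G))) J) *
    (Algebra.TensorProduct.assoc ℂ ℂ ℂ (MonoidAlgebra ℂ G) (MonoidAlgebra ℂ G) (MonoidAlgebra ℂ G))
      (J ⊗ₜ[ℂ] (1 : MonoidAlgebra ℂ G)) =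
  (Algebra.TensorProduct.map (AlgHom.id ℂ (MonoidAlgebra ℂ G)) (GroupAlgebra.comul G)) J *
    ((1 : MonoidAlgebra ℂ G) ⊗ₜ[ℂ] J)

/-- The equations `(ε ⊗ id)(J) = 1` and `(id ⊗ ε)(J) = 1`. -/
def GroupAlgebra.CounitEq (J : MonoidAlgebra ℂ G ⊗[ℂ] MonoidAlgebra ℂ G) : Prop :=
  (Algebra.TensorProduct.lid ℂ (MonoidAlgebra ℂ G))
      ((Algebra.TensorProduct.map (GroupAlgebra.counit G) (AlgHom.id ℂ (MonoidAlgebra ℂ G))) J) = 1 ∧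
  (Algebra.TensorProduct.rid ℂ ℂ (MonoidAlgebra ℂ G))
      ((Algebra.TensorProduct.map (AlgHom.id ℂ (MonoidAlgebra ℂ G)) (GroupAlgebra.counit G)) J) = 1

/-- A twist for the group algebra `ℂ[G]`: an invertible element of `ℂ[G] ⊗ ℂ[G]` satisfying
`((Δ ⊗ id)(J))·(J ⊗ 1) = ((id ⊗ Δ)(J))·(1 ⊗ J)` and `(ε ⊗ id)(J) = (id ⊗ ε)(J) = 1`. -/
def GroupAlgebra.IsTwist (J : MonoidAlgebra ℂ G ⊗[ℂ] MonoidAlgebra ℂ G) : Prop :=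
  IsUnit J ∧ GroupAlgebra.TwistEq G J ∧ GroupAlgebra.CounitEq G J

end

/-- The element `J_B = |H|⁻¹ Σ_{x,y ∈ H} e^{⟨x,y⟩} x ⊗ y` associated to a symplectic structure
`B` on a finite abelian group `H`, where `e^{⟨x,y⟩} = B(y)(x)`. -/
noncomputable def GroupAlgebra.JB (H : Type*) [CommGroup H] [Fintype H]
    (B : H ≃* (H →* ℂˣ)) : MonoidAlgebra ℂ H ⊗[ℂ] MonoidAlgebra ℂ H :=
  (Fintype.card H : ℂ)⁻¹ •
    ∑ x : H, ∑ y : H,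
      ((B y x : ℂˣ) : ℂ) • (MonoidAlgebra.of ℂ H x ⊗ₜ[ℂ] MonoidAlgebra.of ℂ H y)


namespace JBAux

open scoped Classical

noncomputable section

variable {H : Type*} [CommGroup H] [Fintype H]

local notation "A" => MonoidAlgebra ℂ H
local notation "oof" => MonoidAlgebra.of ℂ H

/-! ### Character sums -/

lemma char_sum (χ : H →* ℂˣ) :
    ∑ x : H, ((χ x : ℂ)) = if χ = 1 then (Fintype.card H : ℂ) else 0 := by
  split_ifs with h
  · subst h; simp
  · obtain ⟨a, ha⟩ : ∃ a, χ a ≠ 1 := by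
      by_contra hc; push_neg at hc; exact h (MonoidHom.ext fun x => hc x)
    have key : ((χ a : ℂ)) * ∑ x : H, ((χ x : ℂ)) = ∑ x : H, ((χ x : ℂ)) := by
      rw [Finset.mul_sum]
      exact Fintype.sum_equiv (Equiv.mulLeft a) _ _ (fun x => by simp [map_mul])
    have h2 : (((χ a : ℂ)) - 1) * ∑ x : H, ((χ x : ℂ)) = 0 := by
      rw [sub_mul, key]; ring
    rcases mul_eq_zero.mp h2 with h1 | h1
    · exact absurd (Units.val_eq_one.mp (by exact_mod_cast sub_eq_zero.mp h1)) ha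
    · exact h1

variable (B : H ≃* (H →* ℂˣ))

lemma sum_B_right (t : H) :
    ∑ x : H, ((B t x : ℂ)) = if t = 1 then (Fintype.card H : ℂ) else 0 := by
  rw [char_sum]
  congr 1
  simp only [eq_iff_iff]
  constructor
  · intro h
    exact B.injective (h.trans (map_one B).symm)
  · rintro rfl; exact map_one B

def Qhom (hB : ∀ x y : H, B x y = (B y x)⁻¹) : H →* ℂˣ where
  toFun x := B x x
  map_one' := by simp
  map_mul' x y := by
    have h1 : B x y * B y x = 1 := by rw [hB]; simp
    simp only [map_mul, MonoidHom.mul_apply]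
    rw [mul_comm ((B x) y) ((B y) y), mul_mul_mul_comm, mul_comm ((B y) x) ((B x) y), h1,
      mul_one]

lemma Qhom_apply (hB : ∀ x y : H, B x y = (B y x)⁻¹) (x : H) : Qhom B hB x = B x x := rfl

lemma Q_sq (hB : ∀ x y : H, B x y = (B y x)⁻¹) (x : H) :
    Qhom B hB x * Qhom B hB x = 1 := by
  rw [Qhom_apply]
  nth_rewrite 1 [hB x x]
  simp

lemma Q_inv (hB : ∀ x y : H, B x y = (B y x)⁻¹) : (Qhom B hB)⁻¹ = Qhom B hB := by
  ext x
  simp only [MonoidHom.inv_apply]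
  rw [inv_eq_of_mul_eq_one_left (Q_sq B hB x)]

lemma sum_B_left (hB : ∀ x y : H, B x y = (B y x)⁻¹) (t : H) :
    ∑ x : H, ((B x t : ℂ)) = if t = 1 then (Fintype.card H : ℂ) else 0 := by
  have h : ∀ x : H, ((B x t : ℂ)) = ((B t⁻¹ x : ℂ)) := by
    intro x
    rw [hB x t, map_inv, MonoidHom.inv_apply]
  simp_rw [h]
  rw [sum_B_right]
  simp [inv_eq_one]

lemma expand_inv (x y a b : H) :
    ((B y x : ℂ)) * ((((B (y⁻¹*b) (x⁻¹*a))⁻¹ : ℂˣ) : ℂ)) =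
    ((B y a : ℂ)) * ((B b x : ℂ)) * (((B b a : ℂ)))⁻¹ := by
  have hexp : ((B (y⁻¹*b) (x⁻¹*a) : ℂ)) =
      ((B y x : ℂ)) * ((B y a : ℂ))⁻¹ * ((B b x : ℂ))⁻¹ * ((B b a : ℂ)) := by
    rw [map_mul, map_inv]
    simp [MonoidHom.mul_apply, MonoidHom.inv_apply, map_mul, map_inv, Units.val_mul,
      Units.val_inv_eq_inv_val]
    field_simp
  rw [Units.val_inv_eq_inv_val, hexp]
  field_simp

lemma expand_L (hB : ∀ x y : H, B x y = (B y x)⁻¹) (u v w x : H) :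
    ((B w x : ℂ)) * ((B (x⁻¹*v) (x⁻¹*u) : ℂ)) =
    ((B v u : ℂ)) * (((Qhom B hB * B (w*u*v⁻¹)) x : ℂ)) := by
  have hexp : ((B (x⁻¹*v) (x⁻¹*u) : ℂ)) =
      ((B x x : ℂ)) * ((B x u : ℂ))⁻¹ * ((B v x : ℂ))⁻¹ * ((B v u : ℂ)) := by
    rw [map_mul, map_inv]
    simp [MonoidHom.mul_apply, MonoidHom.inv_apply, map_mul, map_inv, Units.val_mul,
      Units.val_inv_eq_inv_val]
    field_simp
  have hxu : ((B x u : ℂ)) = ((B u x : ℂ))⁻¹ := by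
    rw [hB x u, Units.val_inv_eq_inv_val]
  rw [hexp, hxu, MonoidHom.mul_apply, Qhom_apply, Units.val_mul, map_mul, map_mul, map_inv]
  simp only [MonoidHom.mul_apply, MonoidHom.inv_apply, Units.val_mul, Units.val_inv_eq_inv_val]
  field_simp

lemma expand_R (hB : ∀ x y : H, B x y = (B y x)⁻¹) (u v w y : H) :
    ((B y u : ℂ)) * ((B (y⁻¹*w) (y⁻¹*v) : ℂ)) =
    ((B w v : ℂ)) * (((Qhom B hB * B (v*u⁻¹*w⁻¹)) y : ℂ)) := by
  have hexp : ((B (y⁻¹*w) (y⁻¹*v) : ℂ)) =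
      ((B y y : ℂ)) * ((B y v : ℂ))⁻¹ * ((B w y : ℂ))⁻¹ * ((B w v : ℂ)) := by
    rw [map_mul, map_inv]
    simp [MonoidHom.mul_apply, MonoidHom.inv_apply, map_mul, map_inv, Units.val_mul,
      Units.val_inv_eq_inv_val]
    field_simp
  have hyu : ((B y u : ℂ)) = ((B u y : ℂ))⁻¹ := by
    rw [hB y u, Units.val_inv_eq_inv_val]
  have hyv : ((B y v : ℂ))⁻¹ = ((B v y : ℂ)) := by
    rw [hB y v, Units.val_inv_eq_inv_val, inv_inv]
  rw [hexp, hyu, hyv, MonoidHom.mul_apply, Qhom_apply, Units.val_mul, map_mul, map_mul, map_inv]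
  simp only [MonoidHom.mul_apply, MonoidHom.inv_apply, Units.val_mul, Units.val_inv_eq_inv_val, map_inv]
  field_simp

lemma cond_inv (hB : ∀ x y : H, B x y = (B y x)⁻¹) (t : H)
    (h : Qhom B hB * B t = 1) : Qhom B hB * B t⁻¹ = 1 := by
  have hpt : ∀ z, Qhom B hB z * B t z = 1 := fun z => by
    rw [← MonoidHom.mul_apply, h, MonoidHom.one_apply]
  ext z
  have h1 : B t z = (Qhom B hB z)⁻¹ := eq_inv_of_mul_eq_one_right (hpt z)
  have goal1 : Qhom B hB z * B t⁻¹ z = 1 := by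
    rw [map_inv, MonoidHom.inv_apply, h1, inv_inv]
    exact Q_sq B hB z
  calc ((Qhom B hB * B t⁻¹) z : ℂ) = ((Qhom B hB z * B t⁻¹ z : ℂˣ) : ℂ) := by
        rw [MonoidHom.mul_apply]
    _ = (((1 : ℂˣ)) : ℂ) := by rw [goal1]
    _ = ((1 : H →* ℂˣ) z : ℂ) := by rw [MonoidHom.one_apply]

lemma cond_iff (hB : ∀ x y : H, B x y = (B y x)⁻¹) (t : H) :
    (Qhom B hB * B t⁻¹ = 1) ↔ (Qhom B hB * B t = 1) :=
  ⟨fun h => by have := cond_inv B hB t⁻¹ h; rwa [inv_inv] at this, cond_inv B hB t⟩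

lemma key_sum (hB : ∀ x y : H, B x y = (B y x)⁻¹) (u v w : H) :
    ∑ x : H, ((B w x : ℂ)) * ((B (x⁻¹*v) (x⁻¹*u) : ℂ)) =
    ∑ y : H, ((B y u : ℂ)) * ((B (y⁻¹*w) (y⁻¹*v) : ℂ)) := by
  simp_rw [expand_L B hB u v w, expand_R B hB u v w, ← Finset.mul_sum]
  rw [char_sum, char_sum]
  have hs : v*u⁻¹*w⁻¹ = (w*u*v⁻¹)⁻¹ := by group
  rw [hs, if_congr (cond_iff B hB (w*u*v⁻¹)) rfl rfl]
  by_cases h : Qhom B hB * B (w*u*v⁻¹) = 1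
  · rw [if_pos h]
    have hpt : ∀ z, Qhom B hB z * B (w*u*v⁻¹) z = 1 := fun z => by
      rw [← MonoidHom.mul_apply, h, MonoidHom.one_apply]
    have hsv : B (w*u*v⁻¹) v = (Qhom B hB v)⁻¹ := eq_inv_of_mul_eq_one_right (hpt v)
    have hw : w = (w*u*v⁻¹) * v * u⁻¹ := by group
    have hwv : B w v = B v u := by
      nth_rewrite 1 [hw]
      rw [map_mul, map_mul, map_inv, MonoidHom.mul_apply, MonoidHom.mul_apply,
        MonoidHom.inv_apply, hsv, Qhom_apply, hB u v, inv_inv, inv_mul_cancel, one_mul]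
    rw [hwv]
  · rw [if_neg h, mul_zero, mul_zero]

/-! ### Elements of the tensor square and cube -/

def el (f : H → H → ℂ) : A ⊗[ℂ] A :=
  ∑ p : H × H, f p.1 p.2 • (oof p.1 ⊗ₜ[ℂ] oof p.2)

lemma el_mul (f g : H → H → ℂ) :
    el f * el g = el (fun u v => ∑ p : H × H, f p.1 p.2 * g (p.1⁻¹ * u) (p.2⁻¹ * v)) := by
  unfold el
  rw [Finset.sum_mul_sum]
  have step1 : ∀ p : H × H,
      ∑ q : H × H, (f p.1 p.2 • (oof p.1 ⊗ₜ[ℂ] oof p.2)) * (g q.1 q.2 • (oof q.1 ⊗ₜ[ℂ] oof q.2))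
      = ∑ q : H × H, (f p.1 p.2 * g (p.1⁻¹ * q.1) (p.2⁻¹ * q.2)) • (oof q.1 ⊗ₜ[ℂ] oof q.2) := by
    intro p
    refine Fintype.sum_equiv (Equiv.mulLeft p) _ _ (fun q => ?_)
    rw [smul_mul_smul_comm, Algebra.TensorProduct.tmul_mul_tmul, ← map_mul, ← map_mul]
    simp [Prod.ext_iff, mul_assoc]
  rw [Finset.sum_congr rfl (fun p _ => step1 p), Finset.sum_comm]
  exact Finset.sum_congr rfl fun q _ => by rw [Finset.sum_smul]

lemma el_delta : el (fun u v : H => if u = 1 then if v = 1 then (1:ℂ) else 0 else 0) = 1 := by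
  unfold el
  rw [Fintype.sum_prod_type]
  rw [Finset.sum_eq_single 1]
  · rw [Finset.sum_eq_single 1]
    · simp [Algebra.TensorProduct.one_def, MonoidAlgebra.one_def]
    · intro b _ hb; simp [hb]
    · simp
  · intro a _ ha; simp [ha]
  · simp

lemma el_congr {f g : H → H → ℂ} (h : ∀ u v, f u v = g u v) : el f = el g := by
  unfold el; exact Finset.sum_congr rfl fun p _ => by rw [h]

def el3 (f : H → H → H → ℂ) : A ⊗[ℂ] (A ⊗[ℂ] A) :=
  ∑ p : H × H × H, f p.1 p.2.1 p.2.2 • (oof p.1 ⊗ₜ[ℂ] (oof p.2.1 ⊗ₜ[ℂ] oof p.2.2))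

lemma el3_mul (f g : H → H → H → ℂ) :
    el3 f * el3 g = el3 (fun u v w =>
      ∑ p : H × H × H, f p.1 p.2.1 p.2.2 * g (p.1⁻¹ * u) (p.2.1⁻¹ * v) (p.2.2⁻¹ * w)) := by
  unfold el3
  rw [Finset.sum_mul_sum Finset.univ Finset.univ
    (fun p : H × H × H => f p.1 p.2.1 p.2.2 • (oof p.1 ⊗ₜ[ℂ] (oof p.2.1 ⊗ₜ[ℂ] oof p.2.2)))
    (fun q : H × H × H => g q.1 q.2.1 q.2.2 • (oof q.1 ⊗ₜ[ℂ] (oof q.2.1 ⊗ₜ[ℂ] oof q.2.2)))]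
  have step1 : ∀ p : H × H × H,
      ∑ q : H × H × H, (f p.1 p.2.1 p.2.2 • (oof p.1 ⊗ₜ[ℂ] (oof p.2.1 ⊗ₜ[ℂ] oof p.2.2))) *
          (g q.1 q.2.1 q.2.2 • (oof q.1 ⊗ₜ[ℂ] (oof q.2.1 ⊗ₜ[ℂ] oof q.2.2)))
      = ∑ q : H × H × H, (f p.1 p.2.1 p.2.2 * g (p.1⁻¹ * q.1) (p.2.1⁻¹ * q.2.1) (p.2.2⁻¹ * q.2.2)) •
          (oof q.1 ⊗ₜ[ℂ] (oof q.2.1 ⊗ₜ[ℂ] oof q.2.2)) := by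
    intro p
    refine Fintype.sum_equiv (Equiv.mulLeft p) _ _ (fun q => ?_)
    rw [smul_mul_smul_comm, Algebra.TensorProduct.tmul_mul_tmul,
      Algebra.TensorProduct.tmul_mul_tmul, ← map_mul, ← map_mul, ← map_mul]
    simp [Prod.ext_iff, mul_assoc]
  rw [Finset.sum_congr rfl (fun p _ => step1 p), Finset.sum_comm]
  exact Finset.sum_congr rfl fun q _ => by rw [Finset.sum_smul]

lemma el3_congr {f g : H → H → H → ℂ} (h : ∀ u v w, f u v w = g u v w) : el3 f = el3 g := by
  unfold el3; exact Finset.sum_congr rfl fun p _ => by rw [h]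

/-! ### Images of `el` under the Hopf-algebra maps -/

lemma comul_of (x : H) : GroupAlgebra.comul H (oof x) = oof x ⊗ₜ[ℂ] oof x := by
  simp [GroupAlgebra.comul, MonoidAlgebra.lift_of]

lemma counit_of (x : H) : GroupAlgebra.counit H (oof x) = 1 := by
  simp [GroupAlgebra.counit]

lemma map_comul_el (f : H → H → ℂ) :
    (Algebra.TensorProduct.assoc ℂ ℂ ℂ A A A)
      ((Algebra.TensorProduct.map (GroupAlgebra.comul H) (AlgHom.id ℂ A)) (el f)) =
    el3 (fun u v w => if v = u then f u w else 0) := by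
  unfold el el3
  rw [map_sum, map_sum]
  simp only [map_smul, Algebra.TensorProduct.map_tmul, comul_of, AlgHom.coe_id, id_eq,
    Algebra.TensorProduct.assoc_tmul]
  rw [Fintype.sum_prod_type]
  symm
  rw [Fintype.sum_prod_type]
  refine Finset.sum_congr rfl fun a _ => ?_
  rw [Fintype.sum_prod_type]
  rw [Finset.sum_eq_single a]
  · simp
  · intro b _ hb; simp [hb]
  · simp

lemma map_id_comul_el (f : H → H → ℂ) :
    (Algebra.TensorProduct.map (AlgHom.id ℂ A) (GroupAlgebra.comul H)) (el f) =
    el3 (fun u v w => if w = v then f u v else 0) := by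
  unfold el el3
  rw [map_sum]
  simp only [map_smul, Algebra.TensorProduct.map_tmul, comul_of, AlgHom.coe_id, id_eq]
  rw [Fintype.sum_prod_type]
  symm
  rw [Fintype.sum_prod_type]
  refine Finset.sum_congr rfl fun a _ => ?_
  rw [Fintype.sum_prod_type]
  refine Finset.sum_congr rfl fun b _ => ?_
  rw [Finset.sum_eq_single b]
  · simp
  · intro c _ hc; simp [hc]
  · simp

lemma assoc_el_tmul_one (f : H → H → ℂ) :
    (Algebra.TensorProduct.assoc ℂ ℂ ℂ A A A) ((el f) ⊗ₜ[ℂ] (1 : A)) =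
    el3 (fun u v w => if w = 1 then f u v else 0) := by
  unfold el el3
  rw [TensorProduct.sum_tmul]
  simp_rw [TensorProduct.smul_tmul']
  rw [map_sum]
  have hone : (1 : A) = oof 1 := by simp [MonoidAlgebra.one_def]
  simp only [map_smul, hone, Algebra.TensorProduct.assoc_tmul]
  rw [Fintype.sum_prod_type]
  symm
  rw [Fintype.sum_prod_type]
  refine Finset.sum_congr rfl fun a _ => ?_
  rw [Fintype.sum_prod_type]
  refine Finset.sum_congr rfl fun b _ => ?_
  rw [Finset.sum_eq_single 1]
  · simp
  · intro c _ hc; simp [hc]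
  · simp

lemma one_tmul_el (f : H → H → ℂ) :
    (1 : A) ⊗ₜ[ℂ] (el f) = el3 (fun u v w => if u = 1 then f v w else 0) := by
  unfold el el3
  rw [TensorProduct.tmul_sum]
  simp_rw [TensorProduct.tmul_smul]
  have hone : (1 : A) = oof 1 := by simp [MonoidAlgebra.one_def]
  rw [Fintype.sum_prod_type]
  symm
  rw [Fintype.sum_prod_type]
  rw [Finset.sum_eq_single 1]
  · rw [Fintype.sum_prod_type]
    simp [hone]
  · intro a _ ha; simp [ha]
  · simp

lemma counit_left_el (f : H → H → ℂ) :
    (Algebra.TensorProduct.lid ℂ A)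
      ((Algebra.TensorProduct.map (GroupAlgebra.counit H) (AlgHom.id ℂ A)) (el f)) =
    ∑ y : H, (∑ x : H, f x y) • oof y := by
  unfold el
  rw [map_sum, map_sum]
  simp only [map_smul, Algebra.TensorProduct.map_tmul, counit_of, AlgHom.coe_id, id_eq,
    Algebra.TensorProduct.lid_tmul, one_smul]
  rw [Fintype.sum_prod_type, Finset.sum_comm]
  exact Finset.sum_congr rfl fun y _ => by rw [Finset.sum_smul]

lemma counit_right_el (f : H → H → ℂ) :
    (Algebra.TensorProduct.rid ℂ ℂ A)
      ((Algebra.TensorProduct.map (AlgHom.id ℂ A) (GroupAlgebra.counit H)) (el f)) =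
    ∑ x : H, (∑ y : H, f x y) • oof x := by
  unfold el
  rw [map_sum, map_sum]
  simp only [map_smul, Algebra.TensorProduct.map_tmul, counit_of, AlgHom.coe_id, id_eq,
    Algebra.TensorProduct.rid_tmul, one_smul]
  rw [Fintype.sum_prod_type]
  exact Finset.sum_congr rfl fun x _ => by rw [Finset.sum_smul]

/-! ### `J_B` as an `el` -/

lemma JB_el : GroupAlgebra.JB H B =
    el (fun x y => (Fintype.card H : ℂ)⁻¹ * ((B y x : ℂ))) := by
  unfold GroupAlgebra.JB el
  rw [Finset.smul_sum, Fintype.sum_prod_type]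
  refine Finset.sum_congr rfl fun x _ => ?_
  rw [Finset.smul_sum]
  exact Finset.sum_congr rfl fun y _ => by rw [smul_smul]

lemma JBinv_el : ((Fintype.card H : ℂ)⁻¹ •
      ∑ x : H, ∑ y : H,
        (((B y x)⁻¹ : ℂˣ) : ℂ) • (MonoidAlgebra.of ℂ H x ⊗ₜ[ℂ] MonoidAlgebra.of ℂ H y)) =
    el (fun x y => (Fintype.card H : ℂ)⁻¹ * ((((B y x)⁻¹ : ℂˣ) : ℂ))) := by
  unfold el
  rw [Finset.smul_sum, Fintype.sum_prod_type]
  refine Finset.sum_congr rfl fun x _ => ?_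
  rw [Finset.smul_sum]
  exact Finset.sum_congr rfl fun y _ => by rw [smul_smul]

end

end JBAux


/-- Let `H` be a finite abelian group with a symplectic structure `B` (an isomorphism
`H ≃ Ĥ = Hom(H, ℂˣ)` with `B(x)(y) = (B(y)(x))⁻¹`).  Then
`J_B = |H|⁻¹ Σ_{x,y} e^{⟨x,y⟩} x ⊗ y` is a twist for `ℂ[H]`; in particular it is invertible with
inverse `|H|⁻¹ Σ_{x,y} e^{-⟨x,y⟩} x ⊗ y`. -/

theorem JB_isTwist (H : Type*) [CommGroup H] [Fintype H]
    (B : H ≃* (H →* ℂˣ)) (hB : ∀ x y : H, B x y = (B y x)⁻¹) :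
    GroupAlgebra.IsTwist H (GroupAlgebra.JB H B) ∧
    GroupAlgebra.JB H B *
        ((Fintype.card H : ℂ)⁻¹ •
          ∑ x : H, ∑ y : H,
            (((B y x)⁻¹ : ℂˣ) : ℂ) • (MonoidAlgebra.of ℂ H x ⊗ₜ[ℂ] MonoidAlgebra.of ℂ H y)) = 1 ∧
    ((Fintype.card H : ℂ)⁻¹ •
          ∑ x : H, ∑ y : H,
            (((B y x)⁻¹ : ℂˣ) : ℂ) • (MonoidAlgebra.of ℂ H x ⊗ₜ[ℂ] MonoidAlgebra.of ℂ H y)) *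
        GroupAlgebra.JB H B = 1 := by
  classical
  have hcard : (Fintype.card H : ℂ) ≠ 0 := Nat.cast_ne_zero.mpr Fintype.card_ne_zero
  set c : ℂ := (Fintype.card H : ℂ)⁻¹ with hc
  -- The inverse identity
  have hmul : GroupAlgebra.JB H B *
      (c • ∑ x : H, ∑ y : H,
        (((B y x)⁻¹ : ℂˣ) : ℂ) • (MonoidAlgebra.of ℂ H x ⊗ₜ[ℂ] MonoidAlgebra.of ℂ H y)) = 1 := by
    rw [JBAux.JB_el B, JBAux.JBinv_el B, JBAux.el_mul, ← JBAux.el_delta]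
    refine JBAux.el_congr (fun u v => ?_)
    have hsummand : ∀ p : H × H,
        (c * ((B p.2 p.1 : ℂ))) * (c * (((B (p.2⁻¹*v) (p.1⁻¹*u))⁻¹ : ℂˣ) : ℂ))
        = c^2 * (((B p.2 u : ℂ)) * ((B v p.1 : ℂ)) * (((B v u : ℂ)))⁻¹) := by
      intro p
      calc (c * ((B p.2 p.1 : ℂ))) * (c * (((B (p.2⁻¹*v) (p.1⁻¹*u))⁻¹ : ℂˣ) : ℂ))
          = c^2 * (((B p.2 p.1 : ℂ)) * (((B (p.2⁻¹*v) (p.1⁻¹*u))⁻¹ : ℂˣ) : ℂ)) := by ring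
        _ = c^2 * (((B p.2 u : ℂ)) * ((B v p.1 : ℂ)) * (((B v u : ℂ)))⁻¹) := by
            rw [JBAux.expand_inv]
    simp only [← hc]
    simp only [hsummand]
    have hfactor : ∑ p : H × H, c^2 * (((B p.2 u : ℂ)) * ((B v p.1 : ℂ)) * (((B v u : ℂ)))⁻¹)
        = (c^2 * (((B v u : ℂ)))⁻¹) * ((∑ x : H, ((B v x : ℂ))) * (∑ y : H, ((B y u : ℂ)))) := by
      rw [Finset.sum_mul_sum Finset.univ Finset.univ (fun x => ((B v x : ℂ)))
        (fun y => ((B y u : ℂ))), Finset.mul_sum, Fintype.sum_prod_type]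
      refine Finset.sum_congr rfl fun x _ => ?_
      rw [Finset.mul_sum]
      refine Finset.sum_congr rfl fun y _ => by ring
    rw [hfactor, JBAux.sum_B_right B v, JBAux.sum_B_left B hB u]
    by_cases hu : u = 1
    · by_cases hv : v = 1
      · subst hu; subst hv
        simp only [if_pos rfl, map_one, MonoidHom.one_apply, Units.val_one, inv_one, mul_one]
        rw [hc]
        field_simp
        simp
      · simp [hu, hv]
    · simp [hu]
  have hmul2 : (c • ∑ x : H, ∑ y : H,
        (((B y x)⁻¹ : ℂˣ) : ℂ) • (MonoidAlgebra.of ℂ H x ⊗ₜ[ℂ] MonoidAlgebra.of ℂ H y)) *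
      GroupAlgebra.JB H B = 1 := by
    rw [mul_comm]; exact hmul
  -- The twist equation
  have htwist : GroupAlgebra.TwistEq H (GroupAlgebra.JB H B) := by
    unfold GroupAlgebra.TwistEq
    rw [JBAux.JB_el B, JBAux.map_comul_el, JBAux.assoc_el_tmul_one, JBAux.map_id_comul_el,
      JBAux.one_tmul_el, JBAux.el3_mul, JBAux.el3_mul]
    refine JBAux.el3_congr (fun u v w => ?_)
    have hL : ∑ p : H × H × H,
        (if p.2.1 = p.1 then c * ((B p.2.2 p.1 : ℂ)) else 0) *
          (if p.2.2⁻¹ * w = 1 then c * ((B (p.2.1⁻¹ * v) (p.1⁻¹ * u) : ℂ)) else 0)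
        = ∑ x : H, (c * ((B w x : ℂ))) * (c * ((B (x⁻¹*v) (x⁻¹*u) : ℂ))) := by
      rw [Fintype.sum_prod_type]
      refine Finset.sum_congr rfl fun x _ => ?_
      rw [Fintype.sum_prod_type]
      simp only [ite_mul, mul_ite, zero_mul, mul_zero, inv_mul_eq_one]
      rw [Finset.sum_eq_single x]
      · rw [Finset.sum_eq_single w]
        · simp
        · intro b _ hb; simp [hb]
        · simp
      · intro b _ hb
        simp [hb]
      · simp
    have hR : ∑ p : H × H × H,
        (if p.2.2 = p.2.1 then c * ((B p.2.1 p.1 : ℂ)) else 0) *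
          (if p.1⁻¹ * u = 1 then c * ((B (p.2.2⁻¹ * w) (p.2.1⁻¹ * v) : ℂ)) else 0)
        = ∑ y : H, (c * ((B y u : ℂ))) * (c * ((B (y⁻¹*w) (y⁻¹*v) : ℂ))) := by
      rw [Fintype.sum_prod_type]
      rw [Finset.sum_eq_single u]
      · rw [Fintype.sum_prod_type]
        refine Finset.sum_congr rfl fun y _ => ?_
        simp only [ite_mul, mul_ite, zero_mul, mul_zero, inv_mul_eq_one]
        rw [Finset.sum_eq_single y]
        · simp
        · intro b _ hb; simp [hb]
        · simp
      · intro a _ ha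
        simp [inv_mul_eq_one, ha]
      · simp
    rw [hL, hR]
    have hL2 : ∑ x : H, (c * ((B w x : ℂ))) * (c * ((B (x⁻¹*v) (x⁻¹*u) : ℂ)))
        = c^2 * ∑ x : H, ((B w x : ℂ)) * ((B (x⁻¹*v) (x⁻¹*u) : ℂ)) := by
      rw [Finset.mul_sum]; exact Finset.sum_congr rfl fun x _ => by ring
    have hR2 : ∑ y : H, (c * ((B y u : ℂ))) * (c * ((B (y⁻¹*w) (y⁻¹*v) : ℂ)))
        = c^2 * ∑ y : H, ((B y u : ℂ)) * ((B (y⁻¹*w) (y⁻¹*v) : ℂ)) := by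
      rw [Finset.mul_sum]; exact Finset.sum_congr rfl fun y _ => by ring
    rw [hL2, hR2, JBAux.key_sum B hB u v w]
  -- The counit equations
  have hcounit : GroupAlgebra.CounitEq H (GroupAlgebra.JB H B) := by
    constructor
    · rw [JBAux.JB_el B, JBAux.counit_left_el]
      have h1 : ∀ y : H, (∑ x : H, c * ((B y x : ℂ))) = if y = 1 then 1 else 0 := by
        intro y
        rw [← Finset.mul_sum, JBAux.sum_B_right B y]
        split_ifs
        · rw [hc]; field_simp
        · rw [mul_zero]
      simp only [← hc]
      simp only [h1, ite_smul, one_smul, zero_smul, Finset.sum_ite_eq', Finset.mem_univ, if_true]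
      simp [MonoidAlgebra.one_def]
    · rw [JBAux.JB_el B, JBAux.counit_right_el]
      have h1 : ∀ x : H, (∑ y : H, c * ((B y x : ℂ))) = if x = 1 then 1 else 0 := by
        intro x
        rw [← Finset.mul_sum, JBAux.sum_B_left B hB x]
        split_ifs
        · rw [hc]; field_simp
        · rw [mul_zero]
      simp only [← hc]
      simp only [h1, ite_smul, one_smul, zero_smul, Finset.sum_ite_eq', Finset.mem_univ, if_true]
      simp [MonoidAlgebra.one_def]
  exact ⟨⟨⟨⟨_, _, hmul, hmul2⟩, rfl⟩, htwist, hcounit⟩, hmul, hmul2⟩
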